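/- arXiv:1612.05893 — 2 statements merged into one kernel-verified Lean document; each statement's English description precedes it below -/
import Mathlib

section
/- Let X be a compact metrizable space with a continuous action of a countable group Γ. If the dynamical system (X,Γ) satisfies the descending chain condition (every decreasing sequence of Γ-invariant closed subsets of X eventually stabilizes), then every injective Γ-equivariant continuous map τ : X → X is surjective. -/
/-- If a compact metrizable dynamical system `(X, Γ)` satisfies the descending chain
condition, then every injective `Γ`-equivariant continuous self-map is surjective. -/
theorem stmt_0 {X : Type*} [TopologicalSpace X] [CompactSpace X]
    [TopologicalSpace.MetrizableSpace X]
    {Γ : Type*} [Group Γ] [Countable Γ] [MulAction Γ X]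
    (hcont : ∀ γ : Γ, Continuous (fun x : X => γ • x))
    (hdcc : ∀ A : ℕ → Set X, A 0 = Set.univ →
      (∀ i, IsClosed (A i)) →
      (∀ i (γ : Γ), ∀ x ∈ A i, γ • x ∈ A i) →
      (∀ i, A (i + 1) ⊆ A i) →
      ∃ k, ∀ i ≥ k, A i = A k)
    (τ : X → X) (hτcont : Continuous τ)
    (hτequiv : ∀ (γ : Γ) (x : X), τ (γ • x) = γ • τ x)
    (hτinj : Function.Injective τ) :
    Function.Surjective τ := by
  have hiter : ∀ i (γ : Γ) (x : X), τ^[i] (γ • x) = γ • τ^[i] x := by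
    intro i
    induction i with
    | zero => intro γ x; simp
    | succ n ih =>
      intro γ x
      rw [Function.iterate_succ_apply', Function.iterate_succ_apply', ih, hτequiv]
  set A : ℕ → Set X := fun i => Set.range (τ^[i]) with hA
  obtain ⟨k, hk⟩ := hdcc A
    (by simp [hA])
    (fun i => ((isCompact_range (hτcont.iterate i)).isClosed))
    (by
      rintro i γ x ⟨y, rfl⟩
      exact ⟨γ • y, hiter i γ y⟩)
    (by
      rintro i x ⟨y, rfl⟩
      exact ⟨τ y, by rw [Function.iterate_succ_apply]⟩)
  intro x
  have hx : τ^[k] x ∈ A (k + 1) := by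
    rw [hk (k + 1) (Nat.le_succ k)]
    exact ⟨x, rfl⟩
  obtain ⟨z, hz⟩ := hx
  rw [Function.iterate_succ_apply] at hz
  exact ⟨z, (Function.Injective.iterate hτinj k) hz⟩
end

section
/- Let X ⊂ (ℝ/ℤ)^{ℤ²} be the connected Ledrappier subshift, consisting of all x : ℤ² → ℝ/ℤ satisfying x(n₁+1, n₂) + x(n₁, n₂) + x(n₁, n₂+1) = 0 for all (n₁,n₂) ∈ ℤ². Let E = {(n₁,n₂) ∈ ℤ² : n₂ = 0, or (n₁ = 0 and n₂ < 0)}. Then the restriction map X → (ℝ/ℤ)^E, x ↦ x|_E, is a continuous group isomorphism. -/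
/-- The connected Ledrappier subshift. -/
def ledrappier : Set ((ℤ × ℤ) → AddCircle (1 : ℝ)) :=
  {x | ∀ n₁ n₂ : ℤ, x (n₁ + 1, n₂) + x (n₁, n₂) + x (n₁, n₂ + 1) = 0}

/-- The index set `E = {(n₁,n₂) : n₂ = 0, or n₁ = 0 and n₂ < 0}`. -/
def ledrappierE : Set (ℤ × ℤ) :=
  {p | p.2 = 0 ∨ (p.1 = 0 ∧ p.2 < 0)}

namespace LedAux

local notation "S" => AddCircle (1 : ℝ)

noncomputable def prevPos (r : ℤ → S) (c : S) : ℕ → S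
  | 0 => c
  | k+1 => -(prevPos r c k + r (Int.ofNat k))

noncomputable def prevNeg (r : ℤ → S) (c : S) : ℕ → S
  | 0 => c
  | k+1 => -(prevNeg r c k) - r (Int.negSucc k)

/-- Row below `r`, with value `c` at position `0`. -/
noncomputable def prevRow (r : ℤ → S) (c : S) : ℤ → S
  | Int.ofNat k => prevPos r c k
  | Int.negSucc k => prevNeg r c (k+1)

lemma prevRow_step (r : ℤ → S) (c : S) (n : ℤ) :
    prevRow r c (n + 1) = -(prevRow r c n + r n) := by
  rcases n with k | k
  · have h : (Int.ofNat k) + 1 = Int.ofNat (k+1) := rfl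
    rw [h]
    rfl
  · cases k with
    | zero =>
      have h : Int.negSucc 0 + 1 = Int.ofNat 0 := by decide
      rw [h]
      show prevPos r c 0 = -(prevNeg r c 1 + r (Int.negSucc 0))
      simp [prevPos, prevNeg]
    | succ k =>
      have h : Int.negSucc (k+1) + 1 = Int.negSucc k := by
        rw [Int.negSucc_eq, Int.negSucc_eq]; push_cast; ring
      rw [h]
      show prevNeg r c (k+1) = -(prevNeg r c (k+2) + r (Int.negSucc (k+1)))
      show prevNeg r c (k+1)
        = -((-(prevNeg r c (k+1)) - r (Int.negSucc (k+1))) + r (Int.negSucc (k+1)))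
      abel

noncomputable def nextRow (r : ℤ → S) : ℤ → S := fun n₁ => -(r (n₁+1) + r n₁)

noncomputable def rowsPos (b : ℤ → S) : ℕ → (ℤ → S)
  | 0 => b
  | k+1 => nextRow (rowsPos b k)

noncomputable def rowsNeg (b : ℤ → S) (c : ℤ → S) : ℕ → (ℤ → S)
  | 0 => b
  | k+1 => prevRow (rowsNeg b c k) (c (Int.negSucc k))

noncomputable def rows (b c : ℤ → S) : ℤ → (ℤ → S)
  | Int.ofNat k => rowsPos b k
  | Int.negSucc k => rowsNeg b c (k+1)

lemma rows_negSucc (b c : ℤ → S) (k : ℕ) :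
    rows b c (Int.negSucc k)
      = prevRow (rows b c (Int.negSucc k + 1)) (c (Int.negSucc k)) := by
  cases k with
  | zero =>
    have h : Int.negSucc 0 + 1 = Int.ofNat 0 := by decide
    rw [h]; rfl
  | succ k =>
    have h : Int.negSucc (k+1) + 1 = Int.negSucc k := by
      rw [Int.negSucc_eq, Int.negSucc_eq]; push_cast; ring
    rw [h]; rfl

lemma rows_mem (b c : ℤ → S) :
    (fun p : ℤ × ℤ => rows b c p.2 p.1) ∈ ledrappier := by
  intro n₁ n₂
  simp only
  rcases n₂ with k | k
  · have h : (Int.ofNat k) + 1 = Int.ofNat (k+1) := rfl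
    rw [h]
    show rows b c (Int.ofNat k) (n₁+1) + rows b c (Int.ofNat k) n₁
      + nextRow (rows b c (Int.ofNat k)) n₁ = 0
    simp [nextRow]
  · rw [rows_negSucc b c k]
    rw [prevRow_step]
    abel

lemma rows_zero (b c : ℤ → S) : rows b c 0 = b := rfl

lemma rows_negSucc_zero (b c : ℤ → S) (k : ℕ) :
    rows b c (Int.negSucc k) 0 = c (Int.negSucc k) := rfl

/-- Uniqueness: an element of the subshift vanishing on `E` vanishes. -/
lemma uniq (x : (ℤ × ℤ) → S) (hx : x ∈ ledrappier)
    (hE : ∀ p ∈ ledrappierE, x p = 0) :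
    ∀ n₂ n₁ : ℤ, x (n₁, n₂) = 0 := by
  have hup : ∀ n₁ n₂ : ℤ, x (n₁, n₂ + 1) = -(x (n₁+1, n₂) + x (n₁, n₂)) := by
    intro n₁ n₂
    have h2 : x (n₁, n₂+1) + (x (n₁+1, n₂) + x (n₁, n₂)) = 0 := by
      rw [← hx n₁ n₂]; abel
    exact eq_neg_of_add_eq_zero_left h2
  have hmid : ∀ n₁ n₂ : ℤ, x (n₁, n₂) = -(x (n₁+1, n₂) + x (n₁, n₂ + 1)) := by
    intro n₁ n₂
    have h2 : x (n₁, n₂) + (x (n₁+1, n₂) + x (n₁, n₂+1)) = 0 := by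
      rw [← hx n₁ n₂]; abel
    exact eq_neg_of_add_eq_zero_left h2
  have hrt : ∀ n₁ n₂ : ℤ, x (n₁+1, n₂) = -(x (n₁, n₂) + x (n₁, n₂ + 1)) := by
    intro n₁ n₂
    have h2 : x (n₁+1, n₂) + (x (n₁, n₂) + x (n₁, n₂+1)) = 0 := by
      rw [← hx n₁ n₂]; abel
    exact eq_neg_of_add_eq_zero_left h2
  intro n₂
  induction n₂ using Int.induction_on with
  | zero => intro n₁; exact hE (n₁, 0) (Or.inl rfl)
  | succ i ih =>
    intro n₁
    rw [hup n₁ i, ih n₁, ih (n₁+1)]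
    simp
  | pred i ih =>
    have hcol : x (0, -(i:ℤ) - 1) = 0 :=
      hE (0, -(i:ℤ) - 1) (Or.inr ⟨rfl, by omega⟩)
    have key : ∀ n₁ : ℤ, x (n₁, -(i:ℤ) - 1) = 0 := by
      intro n₁
      induction n₁ using Int.induction_on with
      | zero => exact hcol
      | succ j ihj =>
        have h := hrt j (-(i:ℤ) - 1)
        rw [ihj] at h
        have h2 : x (j, -(i:ℤ) - 1 + 1) = 0 := by
          have : -(i:ℤ) - 1 + 1 = -(i:ℤ) := by ring
          rw [this]; exact ih j
        rw [h2] at h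
        simpa using h
      | pred j ihj =>
        have h := hmid (-(j:ℤ) - 1) (-(i:ℤ) - 1)
        have e1 : -(j:ℤ) - 1 + 1 = -(j:ℤ) := by ring
        rw [e1, ihj] at h
        have h2 : x (-(j:ℤ) - 1, -(i:ℤ) - 1 + 1) = 0 := by
          have : -(i:ℤ) - 1 + 1 = -(i:ℤ) := by ring
          rw [this]; exact ih _
        rw [h2] at h
        simpa using h
    exact key

end LedAux

/-- The restriction map from the connected Ledrappier subshift `X` to `(ℝ/ℤ)^E` is a
continuous group isomorphism: it is additive, continuous, injective on `X`, and maps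
`X` onto all of `(ℝ/ℤ)^E`. -/
theorem stmt_15
    (R : ((ℤ × ℤ) → AddCircle (1 : ℝ)) → (ledrappierE → AddCircle (1 : ℝ)))
    (hR : ∀ x (e : ledrappierE), R x e = x e.val) :
    (∀ x y, R (x + y) = R x + R y) ∧ Continuous R ∧
      Set.InjOn R ledrappier ∧ R '' ledrappier = Set.univ := by
  have hRfun : R = fun x (e : ledrappierE) => x e.val := by
    funext x e; exact hR x e
  refine ⟨?_, ?_, ?_, ?_⟩
  · intro x y
    rw [hRfun]
    rfl
  · rw [hRfun]
    exact continuous_pi fun e => continuous_apply e.val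
  · intro x hx y hy hxy
    have hz : (x - y) ∈ ledrappier := by
      intro n₁ n₂
      have h1 := hx n₁ n₂
      have h2 := hy n₁ n₂
      simp only [Pi.sub_apply]
      rw [show ∀ a b c a' b' c' : AddCircle (1:ℝ),
        (a - a') + (b - b') + (c - c') = (a + b + c) - (a' + b' + c') from
        fun a b c a' b' c' => by abel, h1, h2]
      simp
    have hzE : ∀ p ∈ ledrappierE, (x - y) p = 0 := by
      intro p hp
      have := congrFun hxy ⟨p, hp⟩
      rw [hR, hR] at this
      simp [Pi.sub_apply, this]
    have h0 := LedAux.uniq (x - y) hz hzE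
    have : x - y = 0 := by
      funext p
      exact h0 p.2 p.1
    exact sub_eq_zero.mp this
  · apply Set.eq_univ_of_forall
    intro y
    set b : ℤ → AddCircle (1:ℝ) := fun n₁ => y ⟨(n₁, 0), Or.inl rfl⟩ with hb
    set c : ℤ → AddCircle (1:ℝ) := fun n₂ =>
      if h : n₂ < 0 then y ⟨(0, n₂), Or.inr ⟨rfl, h⟩⟩ else 0 with hc
    refine ⟨fun p : ℤ × ℤ => LedAux.rows b c p.2 p.1, LedAux.rows_mem b c, ?_⟩
    funext e
    rw [hR]
    obtain ⟨⟨n₁, n₂⟩, he⟩ := e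
    rcases he with h0 | ⟨h1, h2⟩
    · simp only at h0
      subst h0
      show LedAux.rows b c 0 n₁ = _
      rw [LedAux.rows_zero]
    · simp only at h1 h2
      subst h1
      rcases n₂ with k | k
      · rw [Int.ofNat_eq_natCast] at h2; omega
      · show LedAux.rows b c (Int.negSucc k) 0 = _
        rw [LedAux.rows_negSucc_zero]
        rw [hc]
        simp only
        rw [dif_pos (Int.negSucc_lt_zero k)]
end
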